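/- There do not exist positive reals m12, m21, r1, r2, A satisfying simultaneously m12/A + m21/A - r1 - r2 > 0 and -m12*r1/A - m21*r2/A + r1*r2 > 0. Hence the quadratic H(λ) = λ² + (m12/A + m21/A - r1 - r2)λ + (r1*r2 - m12*r1/A - m21*r2/A) never satisfies the Routh–Hurwitz conditions for all roots to have negative real part. -/

import Mathlib

/-- The Routh–Hurwitz conditions for the quadratic
`H(λ) = λ² + (m12/A + m21/A - r1 - r2)λ + (r1*r2 - m12*r1/A - m21*r2/A)`
can never both hold for positive parameters, hence the origin of the
two-patch saturated-migration model is never stable. -/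
theorem stmt_0 :
    ¬ ∃ m12 m21 r1 r2 A : ℝ,
      0 < m12 ∧ 0 < m21 ∧ 0 < r1 ∧ 0 < r2 ∧ 0 < A ∧
      m12 / A + m21 / A - r1 - r2 > 0 ∧
      -(m12 * r1) / A - m21 * r2 / A + r1 * r2 > 0 := by
  rintro ⟨m12, m21, r1, r2, A, hm12, hm21, hr1, hr2, hA, h1, h2⟩
  rw [gt_iff_lt, sub_sub, sub_pos, ← add_div, lt_div_iff₀ hA] at h1
  have h2' : -(m12 * r1) + -(m21 * r2) + r1 * r2 * A > 0 := by
    have := mul_pos h2 hA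
    field_simp at this
    nlinarith [this]
  rcases le_total r1 r2 with h | h
  · nlinarith [mul_nonneg hm21.le (sub_nonneg.mpr h), mul_pos (mul_pos hr1 hr2) hA,
      mul_lt_mul_of_pos_left h1 hr1]
  · nlinarith [mul_nonneg hm12.le (sub_nonneg.mpr h), mul_pos (mul_pos hr1 hr2) hA,
      mul_lt_mul_of_pos_left h1 hr2]
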